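/- Let a₁, a₂, a₃ be real numbers with 0 < a₁ < 1, 0 < a₂ < 1, 0 < a₃ < 1. Then there exists exactly one triple (x₁, x₂, x₃) with 0 < x₁ < 1, 0 < x₂ < 1, 0 < x₃ < 1 satisfying x₁ = a₁(1 − x₂)(1 − x₃), x₂ = a₂(1 − x₁)(1 − x₃), and x₃ = a₃(1 − x₁)(1 − x₂). -/

import Mathlib

open Set Filter Topology


lemma Vpos (s t u : ℝ) (hs : 0 < s) (ht : 0 < t) (hts : t ≤ s) (hsu : s < u)
    (hu1 : u < 1) (hC : (1-u)*(1-s*t)^2 < (1-s)*(1-t)) :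
    0 < u*((1-s*t)^2 - 4*(s*t*((1-s)*(1-t)))) - (1-s*t)*(s+t-2*s*t)
        + 4*(s*t*((1-s)*(1-t))) := by
  have hs1 : s < 1 := hsu.trans hu1
  have ht1 : t < 1 := lt_of_le_of_lt hts hs1
  have hq : 0 < 1 - s*t := by nlinarith
  have hm : 0 < (1-s)*(1-t) := mul_pos (by linarith) (by linarith)
  rcases le_or_gt ((1-s*t)^2 - 4*(s*t*((1-s)*(1-t)))) 0 with hσ | hσ
  · have h1 : 0 ≤ (u-1) * ((1-s*t)^2 - 4*(s*t*((1-s)*(1-t)))) := by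
      nlinarith [mul_nonneg (neg_nonneg.2 (show u-1 ≤ 0 by linarith)) (neg_nonneg.2 hσ)]
    nlinarith [mul_pos hq hm]
  · rcases le_or_gt ((1-s*t)^2) (4*((1-s)*(1-t))) with h4 | h4
    · have h1 : 0 ≤ s*t*((1-s)*(1-t))*(4*((1-s)*(1-t)) - (1-s*t)^2) :=
        mul_nonneg (by positivity) (by linarith)
      have h2 : 0 < ((1-s)*(1-t) - (1-u)*(1-s*t)^2) *
          ((1-s*t)^2 - 4*(s*t*((1-s)*(1-t)))) := mul_pos (by linarith) hσ
      have hq2 : 0 < (1-s*t)^2 := by positivity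
      by_contra hcon
      push_neg at hcon
      nlinarith [mul_nonneg hq2.le (neg_nonneg.2 hcon)]
    · have h4s : 0 ≤ 4*s - 3*s*t - 1 := by
        nlinarith [sq_nonneg (s-t), sq_nonneg (1-s), sq_nonneg (1-t), sq_nonneg (s*t-1),
          mul_pos ht (ht.trans_le hts), sq_nonneg (s+t-2), sq_nonneg (s*t - s), sq_nonneg (s*t - t)]
      have h1 : 0 ≤ t*(1-s)^2*(4*s-3*s*t-1) := by positivity
      have h2 : 0 < (u-s) * ((1-s*t)^2 - 4*(s*t*((1-s)*(1-t)))) :=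
        mul_pos (by linarith) hσ
      nlinarith []

/-- derivative value negative at a root, assuming a₃ ≤ a₂ -/
lemma derivNegAux (a₁ a₂ a₃ r : ℝ)
    (h₁ : 0 < a₁) (h₁' : a₁ < 1) (h₂ : 0 < a₂) (h₂' : a₂ < 1)
    (h₃ : 0 < a₃) (h₃' : a₃ < 1) (hle : a₃ ≤ a₂)
    (hr : 0 < r) (hr1 : r < 1)
    (hroot : (1-r)*(1-a₂*a₃*r^2)^2 - a₁*((1-a₂*r)*(1-a₃*r)) = 0) :
    -(1-a₂*a₃*r^2)^2 - (1-r)*(2*(1-a₂*a₃*r^2))*(2*(a₂*a₃)*r)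
      - a₁*(-(a₂*(1-a₃*r)) - a₃*(1-a₂*r)) < 0 := by
  have hM : 0 < (1-a₂*r)*(1-a₃*r) :=
    mul_pos (by nlinarith) (by nlinarith)
  have hr2 : r^2 < 1 := by nlinarith
  have ha23 : a₂*a₃ < 1 := by nlinarith
  have hq : 0 < 1 - a₂*a₃*r^2 := by
    nlinarith [mul_pos (mul_pos h₂ h₃) (show (0:ℝ) < 1 - r^2 by linarith)]
  have hC : (1-r)*(1-(a₂*r)*(a₃*r))^2 < (1-(a₂*r))*(1-(a₃*r)) := by
    nlinarith [mul_pos (sub_pos.2 h₁') hM]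
  have hV := Vpos (a₂*r) (a₃*r) r (by positivity) (by positivity)
    (by nlinarith) (by nlinarith) hr1 hC
  by_contra hcon
  push_neg at hcon
  nlinarith [mul_pos hq hV, mul_nonneg (mul_nonneg hcon hM.le) hr.le]

lemma derivNegAux2 (a₁ a₂ a₃ r : ℝ)
    (h₁ : 0 < a₁) (h₁' : a₁ < 1) (h₂ : 0 < a₂) (h₂' : a₂ < 1)
    (h₃ : 0 < a₃) (h₃' : a₃ < 1)
    (hr : 0 < r) (hr1 : r < 1)
    (hroot : (1-r)*(1-a₂*a₃*r^2)^2 - a₁*((1-a₂*r)*(1-a₃*r)) = 0) :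
    -(1-a₂*a₃*r^2)^2 - (1-r)*(2*(1-a₂*a₃*r^2))*(2*(a₂*a₃)*r)
      - a₁*(-(a₂*(1-a₃*r)) - a₃*(1-a₂*r)) < 0 := by
  rcases le_total a₃ a₂ with hle | hle
  · exact derivNegAux a₁ a₂ a₃ r h₁ h₁' h₂ h₂' h₃ h₃' hle hr hr1 hroot
  · have := derivNegAux a₁ a₃ a₂ r h₁ h₁' h₃ h₃' h₂ h₂' hle hr hr1 (by linarith [hroot, show (1-r)*(1-a₃*a₂*r^2)^2 - a₁*((1-a₃*r)*(1-a₂*r)) = (1-r)*(1-a₂*a₃*r^2)^2 - a₁*((1-a₂*r)*(1-a₃*r)) from by ring])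
    linarith [this, show -(1-a₃*a₂*r^2)^2 - (1-r)*(2*(1-a₃*a₂*r^2))*(2*(a₃*a₂)*r)
      - a₁*(-(a₃*(1-a₂*r)) - a₂*(1-a₃*r)) = -(1-a₂*a₃*r^2)^2 - (1-r)*(2*(1-a₂*a₃*r^2))*(2*(a₂*a₃)*r)
      - a₁*(-(a₂*(1-a₃*r)) - a₃*(1-a₂*r)) from by ring]

/-- If F is continuous, and at every root in (0,1) it has a negative derivative,
then F has at most one root in (0,1). -/
lemma at_most_one_root (F : ℝ → ℝ) (hc : Continuous F)
    (hd : ∀ r ∈ Ioo (0:ℝ) 1, F r = 0 → ∃ d, HasDerivAt F d r ∧ d < 0)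
    {u v : ℝ} (hu : u ∈ Ioo (0:ℝ) 1) (hv : v ∈ Ioo (0:ℝ) 1)
    (hFu : F u = 0) (hFv : F v = 0) (huv : u < v) : False := by
  obtain ⟨du, hdu, hdu_neg⟩ := hd u hu hFu
  -- find t ∈ (u,v) with F t < 0
  have hslope := hasDerivAt_iff_tendsto_slope.1 hdu
  have h1 : ∀ᶠ y in 𝓝[>] u, slope F u y < 0 :=
    ((hslope.mono_left (nhdsWithin_mono _ (fun y hy => ne_of_gt hy))).eventually
      (Iio_mem_nhds hdu_neg))
  have h2 : Ioo u v ∈ 𝓝[>] u := Ioo_mem_nhdsGT_of_mem ⟨le_refl u, huv⟩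
  obtain ⟨t, hts, htIoo⟩ := (h1.and (eventually_of_mem h2 (fun y hy => hy))).exists
  have hFt : F t < 0 := by
    have h3 : slope F u t = F t / (t - u) := by
      simp [slope_def_field, hFu, div_eq_div_iff]
    rw [h3] at hts
    have h4 : 0 < t - u := by linarith [htIoo.1]
    nlinarith [hts, h4, div_mul_cancel₀ (F t) (ne_of_gt h4)]
  -- r := least root in [t, v]
  set S : Set ℝ := {w | w ∈ Icc t v ∧ F w = 0} with hS
  have hSne : S.Nonempty := ⟨v, ⟨⟨le_of_lt htIoo.2, le_refl v⟩, hFv⟩⟩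
  have hSbdd : BddBelow S := ⟨t, fun w hw => hw.1.1⟩
  have hSclosed : IsClosed S := by
    have : S = Icc t v ∩ F ⁻¹' {0} := by ext w; simp [hS, Set.mem_inter_iff]
    rw [this]
    exact isClosed_Icc.inter (isClosed_singleton.preimage hc)
  have hrS : sInf S ∈ S := hSclosed.csInf_mem hSne hSbdd
  set r := sInf S with hrdef
  have hFr : F r = 0 := hrS.2
  have htr : t < r := by
    rcases lt_or_eq_of_le hrS.1.1 with h | h
    · exact h
    · exact absurd hFr (by rw [← h]; exact ne_of_lt hFt)
  have hrv : r ≤ v := hrS.1.2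
  have hrIoo : r ∈ Ioo (0:ℝ) 1 := ⟨lt_trans hu.1 (lt_trans htIoo.1 htr), lt_of_le_of_lt hrv hv.2⟩
  -- F < 0 on [t, r)
  have hneg : ∀ w ∈ Ico t r, F w < 0 := by
    intro w hw
    rcases lt_trichotomy (F w) 0 with h | h | h
    · exact h
    · exact absurd (csInf_le hSbdd ⟨⟨hw.1, le_trans hw.2.le hrv⟩, h⟩) (not_le.2 hw.2)
    · obtain ⟨z, hz, hFz⟩ := intermediate_value_Icc hw.1 (hc.continuousOn)
        (⟨le_of_lt hFt, le_of_lt h⟩ : (0:ℝ) ∈ Icc (F t) (F w))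
      have : r ≤ z := csInf_le hSbdd ⟨⟨hz.1, le_trans hz.2 (le_trans hw.2.le hrv)⟩, hFz⟩
      linarith [hz.2, hw.2]
  -- contradiction with derivative at r
  obtain ⟨dr, hdr, hdr_neg⟩ := hd r hrIoo hFr
  have hslope' := hasDerivAt_iff_tendsto_slope.1 hdr
  have g1 : ∀ᶠ y in 𝓝[<] r, slope F r y < 0 :=
    ((hslope'.mono_left (nhdsWithin_mono _ (fun y hy => ne_of_lt hy))).eventually
      (Iio_mem_nhds hdr_neg))
  have g2 : Ico t r ∈ 𝓝[<] r := Ico_mem_nhdsLT_of_mem ⟨htr, le_refl r⟩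
  obtain ⟨y, hys, hyI⟩ := (g1.and (eventually_of_mem g2 (fun y hy => hy))).exists
  have hyr : y - r < 0 := by linarith [hyI.2]
  have hFy : F y < 0 := hneg y hyI
  have : slope F r y = F y / (y - r) := by simp [slope_def_field, hFr]
  rw [this] at hys
  nlinarith [div_pos_iff.2 (Or.inr ⟨hFy, hyr⟩), hys]

noncomputable def Ffun (a₁ a₂ a₃ : ℝ) : ℝ → ℝ :=
  fun w => (1-w)*(1-a₂*a₃*w^2)^2 - a₁*((1-a₂*w)*(1-a₃*w))

lemma sol_satisfies (a₁ a₂ a₃ u : ℝ)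
    (h₁ : 0 < a₁) (h₁' : a₁ < 1) (h₂ : 0 < a₂) (h₂' : a₂ < 1)
    (h₃ : 0 < a₃) (h₃' : a₃ < 1) (hu : 0 < u) (hu1 : u < 1)
    (hroot : Ffun a₁ a₂ a₃ u = 0) :
    (0 < 1-u ∧ 1-u < 1) ∧
    (0 < a₂*u*(1-a₃*u)/(1-a₂*a₃*u^2) ∧ a₂*u*(1-a₃*u)/(1-a₂*a₃*u^2) < 1) ∧
    (0 < a₃*u*(1-a₂*u)/(1-a₂*a₃*u^2) ∧ a₃*u*(1-a₂*u)/(1-a₂*a₃*u^2) < 1) ∧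
    1-u = a₁ * (1 - a₂*u*(1-a₃*u)/(1-a₂*a₃*u^2)) * (1 - a₃*u*(1-a₂*u)/(1-a₂*a₃*u^2)) ∧
    a₂*u*(1-a₃*u)/(1-a₂*a₃*u^2) = a₂ * (1 - (1-u)) * (1 - a₃*u*(1-a₂*u)/(1-a₂*a₃*u^2)) ∧
    a₃*u*(1-a₂*u)/(1-a₂*a₃*u^2) = a₃ * (1 - (1-u)) * (1 - a₂*u*(1-a₃*u)/(1-a₂*a₃*u^2)) := by
  have h2u : a₂*u < 1 := by nlinarith
  have h3u : a₃*u < 1 := by nlinarith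
  have hq : 0 < 1 - a₂*a₃*u^2 := by
    nlinarith [mul_lt_of_lt_one_left (mul_pos h₃ hu) h2u]
  have hroot' : (1-u)*(1-a₂*a₃*u^2)^2 = a₁*((1-a₂*u)*(1-a₃*u)) := by
    have := hroot
    simp only [Ffun] at this
    linarith
  refine ⟨⟨by linarith, by linarith⟩, ⟨?_, ?_⟩, ⟨?_, ?_⟩, ?_, ?_, ?_⟩
  · exact div_pos (mul_pos (mul_pos h₂ hu) (by linarith)) hq
  · rw [div_lt_one hq]; nlinarith
  · exact div_pos (mul_pos (mul_pos h₃ hu) (by linarith)) hq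
  · rw [div_lt_one hq]; nlinarith
  · generalize hqd : 1-a₂*a₃*u^2 = q at *
    field_simp
    subst hqd
    linear_combination hroot'
  · generalize hqd : 1-a₂*a₃*u^2 = q at *
    field_simp
    subst hqd
    ring
  · generalize hqd : 1-a₂*a₃*u^2 = q at *
    field_simp
    subst hqd
    ring

lemma Ffun_hasDeriv (a₁ a₂ a₃ r : ℝ) :
    HasDerivAt (Ffun a₁ a₂ a₃)
      (-(1-a₂*a₃*r^2)^2 - (1-r)*(2*(1-a₂*a₃*r^2))*(2*(a₂*a₃)*r)
        - a₁*(-(a₂*(1-a₃*r)) - a₃*(1-a₂*r))) r := by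
  have h2 : HasDerivAt (fun w:ℝ => 1 - a₂*a₃*w^2) (-(a₂*a₃*(2*r))) r := by
    have := ((hasDerivAt_pow 2 r).const_mul (a₂*a₃)).const_sub 1
    refine this.congr_deriv ?_
    push_cast
    ring
  have hN := ((hasDerivAt_id r).const_sub 1).mul (h2.pow 2)
  have h3 : HasDerivAt (fun w:ℝ => 1 - a₂*w) (-a₂) r := by
    have := ((hasDerivAt_id r).const_mul a₂).const_sub 1
    simpa using this
  have h4 : HasDerivAt (fun w:ℝ => 1 - a₃*w) (-a₃) r := by
    have := ((hasDerivAt_id r).const_mul a₃).const_sub 1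
    simpa using this
  have hM := h3.mul h4
  have := hN.sub (hM.const_mul a₁)
  refine this.congr_deriv ?_
  simp only [id_eq, Pi.pow_apply]
  push_cast
  ring



lemma back (a₁ a₂ a₃ y₁ y₂ y₃ : ℝ)
    (e₁ : y₁ = a₁*(1-y₂)*(1-y₃)) (e₂ : y₂ = a₂*(1-y₁)*(1-y₃)) (e₃ : y₃ = a₃*(1-y₁)*(1-y₂)) :
    y₂*(1-a₂*a₃*(1-y₁)^2) = a₂*(1-y₁)*(1-a₃*(1-y₁)) ∧
    y₃*(1-a₂*a₃*(1-y₁)^2) = a₃*(1-y₁)*(1-a₂*(1-y₁)) ∧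
    Ffun a₁ a₂ a₃ (1-y₁) = 0 := by
  have h2 : y₂*(1-a₂*a₃*(1-y₁)^2) = a₂*(1-y₁)*(1-a₃*(1-y₁)) := by
    linear_combination e₂ - (a₂*(1-y₁))*e₃
  have h3 : y₃*(1-a₂*a₃*(1-y₁)^2) = a₃*(1-y₁)*(1-a₂*(1-y₁)) := by
    linear_combination e₃ - (a₃*(1-y₁))*e₂
  refine ⟨h2, h3, ?_⟩
  show (1-(1-y₁))*(1-a₂*a₃*(1-y₁)^2)^2 - a₁*((1-a₂*(1-y₁))*(1-a₃*(1-y₁))) = 0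
  linear_combination (1-a₂*a₃*(1-y₁)^2)^2 * e₁ - a₁*(1-a₂*a₃*(1-y₁)^2)*(1-y₂)*h3
    - a₁*(1-a₃*(1-y₁))*h2

theorem three_arg_unique_social_model
    (a₁ a₂ a₃ : ℝ)
    (h₁ : 0 < a₁) (h₁' : a₁ < 1)
    (h₂ : 0 < a₂) (h₂' : a₂ < 1)
    (h₃ : 0 < a₃) (h₃' : a₃ < 1) :
    ∃! x : ℝ × ℝ × ℝ,
      (0 < x.1 ∧ x.1 < 1) ∧ (0 < x.2.1 ∧ x.2.1 < 1) ∧ (0 < x.2.2 ∧ x.2.2 < 1) ∧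
      x.1 = a₁ * (1 - x.2.1) * (1 - x.2.2) ∧
      x.2.1 = a₂ * (1 - x.1) * (1 - x.2.2) ∧
      x.2.2 = a₃ * (1 - x.1) * (1 - x.2.1) := by
  set F := Ffun a₁ a₂ a₃ with hFdef
  have hFc : Continuous F := by
    rw [continuous_iff_continuousAt]
    intro r
    exact (Ffun_hasDeriv a₁ a₂ a₃ r).continuousAt
  have hF0 : F 0 = 1 - a₁ := by simp [hFdef, Ffun]
  have hF1 : F 1 = -(a₁*((1-a₂)*(1-a₃))) := by simp [hFdef, Ffun]
  have hmem : (0:ℝ) ∈ Set.Ioo (F 1) (F 0) := by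
    constructor
    · rw [hF1]
      have : 0 < a₁*((1-a₂)*(1-a₃)) := by
        nlinarith [mul_pos (mul_pos h₁ (show (0:ℝ) < 1-a₂ by linarith))
          (show (0:ℝ) < 1-a₃ by linarith)]
      linarith
    · rw [hF0]; linarith
  obtain ⟨u₀, hu₀I, hu₀⟩ := intermediate_value_Ioo' (by norm_num : (0:ℝ) ≤ 1)
    hFc.continuousOn hmem
  have hd : ∀ r ∈ Set.Ioo (0:ℝ) 1, F r = 0 → ∃ d, HasDerivAt F d r ∧ d < 0 := by
    intro r hrI hFr
    refine ⟨_, Ffun_hasDeriv a₁ a₂ a₃ r, ?_⟩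
    exact derivNegAux2 a₁ a₂ a₃ r h₁ h₁' h₂ h₂' h₃ h₃' hrI.1 hrI.2
      (by simpa [hFdef, Ffun] using hFr)
  have hsol := sol_satisfies a₁ a₂ a₃ u₀ h₁ h₁' h₂ h₂' h₃ h₃' hu₀I.1 hu₀I.2 hu₀
  refine ⟨⟨1-u₀, a₂*u₀*(1-a₃*u₀)/(1-a₂*a₃*u₀^2), a₃*u₀*(1-a₂*u₀)/(1-a₂*a₃*u₀^2)⟩,
    hsol, ?_⟩
  rintro ⟨y₁, y₂, y₃⟩ ⟨⟨hb1, hb1'⟩, ⟨hb2, hb2'⟩, ⟨hb3, hb3'⟩, e₁, e₂, e₃⟩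
  obtain ⟨hy2, hy3, hFv⟩ := back a₁ a₂ a₃ y₁ y₂ y₃ e₁ e₂ e₃
  have hvI : (1 - y₁) ∈ Set.Ioo (0:ℝ) 1 := ⟨by linarith, by linarith⟩
  have hveq : 1 - y₁ = u₀ := by
    rcases lt_trichotomy (1 - y₁) u₀ with h | h | h
    · exact absurd (at_most_one_root F hFc hd hvI hu₀I hFv hu₀ h) (fun hf => hf)
    · exact h
    · exact absurd (at_most_one_root F hFc hd hu₀I hvI hu₀ hFv h) (fun hf => hf)
  have hq : (0:ℝ) < 1 - a₂*a₃*u₀^2 := by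
    nlinarith [mul_lt_of_lt_one_left (mul_pos h₃ hu₀I.1)
      (show a₂*u₀ < 1 by nlinarith [hu₀I.1, hu₀I.2]),
      mul_pos (mul_pos h₂ hu₀I.1) (mul_pos h₃ hu₀I.1)]
  rw [hveq] at hy2 hy3
  have hy1 : y₁ = 1 - u₀ := by linarith
  have hy2' : y₂ = a₂*u₀*(1-a₃*u₀)/(1-a₂*a₃*u₀^2) := by
    rw [eq_div_iff (ne_of_gt hq)]
    linear_combination hy2
  have hy3' : y₃ = a₃*u₀*(1-a₂*u₀)/(1-a₂*a₃*u₀^2) := by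
    rw [eq_div_iff (ne_of_gt hq)]
    linear_combination hy3
  simp [Prod.ext_iff, hy1, hy2', hy3']
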